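/- Let C be a k-algebra, B a subalgebra, and X a finite-dimensional B-subbimodule of C with C = B ⊕ X as B-bimodules. Then for every finite-dimensional indecomposable B-module N there exists a finite-dimensional indecomposable C-module M such that N is a direct summand of the restriction of M to B, and M can be chosen with dim_k M ≤ (1 + dim_k X)·dim_k N. -/

import Mathlib

/-!
STATEMENT 14: Let `C` be a `k`-algebra, `B` a subalgebra, and `X` a finite-dimensional
`B`-subbimodule of `C` with `C = B ⊕ X`.  Then every finite-dimensional indecomposable
`B`-module `N` is a direct summand of the restriction to `B` of some finite-dimensional
indecomposable `C`-module `M` with `dim M ≤ (1 + dim X) · dim N`.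
-/

section Framework

variable (k : Type) [Field k] (A : Type) [Ring A] [Algebra k A]

/-- A module over the `k`-algebra `A`, recorded as a `k`-vector space together with
an algebra map `A → End_k(V)`. -/
structure AlgRep where
  V : Type
  [acg : AddCommGroup V]
  [mod : Module k V]
  ρ : A →ₐ[k] Module.End k V

attribute [instance] AlgRep.acg AlgRep.mod

variable {k A}

/-- An `A`-invariant subspace. -/
def AlgRep.IsInvt (R : AlgRep k A) (p : Submodule k R.V) : Prop :=
  ∀ a : A, p.map (R.ρ a) ≤ p

/-- Indecomposability: no nontrivial invariant direct-sum decomposition. -/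
def AlgRep.Indec (R : AlgRep k A) : Prop :=
  Nontrivial R.V ∧ ∀ p q : Submodule k R.V, R.IsInvt p → R.IsInvt q → IsCompl p q →
    p = ⊥ ∨ q = ⊥

/-- Isomorphism of modules. -/
structure AlgRep.Iso (R S : AlgRep k A) where
  e : R.V ≃ₗ[k] S.V
  comm : ∀ (a : A) (v : R.V), e (R.ρ a v) = S.ρ a (e v)

variable (k A)

/-- Finite representation type: finitely many isomorphism classes of
finite-dimensional indecomposable modules. -/
def FiniteRepType : Prop :=
  ∃ (m : ℕ) (F : Fin m → AlgRep k A), ∀ R : AlgRep k A,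
    FiniteDimensional k R.V → R.Indec → ∃ i, Nonempty (R.Iso (F i))

/-- Tame representation type: for each dimension bound `d`, the finite-dimensional
indecomposable modules of dimension at most `d` fall, up to isomorphism and finitely
many exceptions, into finitely many one-parameter families.  (Finite type is a
special case.) -/
def TameRepType : Prop :=
  ∀ d : ℕ, ∃ (m₁ m₂ : ℕ) (F : Fin m₁ → k → AlgRep k A) (Ex : Fin m₂ → AlgRep k A),
    ∀ R : AlgRep k A, FiniteDimensional k R.V → Module.finrank k R.V ≤ d → R.Indec →
      (∃ i lam, Nonempty (R.Iso (F i lam))) ∨ (∃ j, Nonempty (R.Iso (Ex j)))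

end Framework


/-- The restriction of a `C`-module to a subalgebra `B`. -/
noncomputable def AlgRep.res {k C : Type} [Field k] [Ring C] [Algebra k C]
    (M : AlgRep k C) (B : Subalgebra k C) : AlgRep k ↥B :=
  { V := M.V, ρ := M.ρ.comp B.val }

-- auxiliary lemmas
section MyAux

variable {k A : Type} [Field k] [Ring A] [Algebra k A]

/-- Restriction of a representation to an invariant subspace. -/
noncomputable def AlgRep.subrep (R : AlgRep k A) (p : Submodule k R.V) (hp : R.IsInvt p) :
    AlgRep k A where
  V := ↥p
  ρ :=
  { toFun := fun a => (R.ρ a).restrict (fun x hx => hp a ⟨x, hx, rfl⟩)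
    map_one' := by ext x; simp [LinearMap.restrict_apply]
    map_mul' := by intro a b; ext x; simp [LinearMap.restrict_apply]
    map_zero' := by ext x; simp [LinearMap.restrict_apply]
    map_add' := by intro a b; ext x; simp [LinearMap.restrict_apply]
    commutes' := by
      intro r; ext x
      simp [LinearMap.restrict_apply, Module.algebraMap_end_apply, Subtype.ext_iff] }

lemma AlgRep.subrep_apply (R : AlgRep k A) (p : Submodule k R.V) (hp : R.IsInvt p)
    (a : A) (x : (R.subrep p hp).V) : (((R.subrep p hp).ρ a) x).1 = R.ρ a x.1 := rfl

/-- Fitting-type dichotomy: an equivariant endomorphism of a finite-dimensional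
indecomposable module is bijective or nilpotent. -/
lemma bijective_or_nilpotent (N : AlgRep k A) [FiniteDimensional k N.V] (hN : N.Indec)
    (f : Module.End k N.V) (hf : ∀ (a : A) (v : N.V), f (N.ρ a v) = N.ρ a (f v)) :
    Function.Bijective f ∨ IsNilpotent f := by
  obtain ⟨n, hn, hn1⟩ :=
    (f.eventually_isCompl_ker_pow_range_pow.and (Filter.eventually_ge_atTop 1)).exists
  have hcomm : ∀ (a : A), ∀ m : ℕ, ∀ v, (f ^ m) (N.ρ a v) = N.ρ a ((f ^ m) v) := by
    intro a m
    induction m with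
    | zero => intro v; simp
    | succ m ih =>
      intro v
      simp only [pow_succ, Module.End.mul_apply]
      rw [hf, ih]
  have hker : N.IsInvt (LinearMap.ker (f ^ n)) := by
    intro a
    rintro _ ⟨x, hx, rfl⟩
    simp only [LinearMap.mem_ker] at hx ⊢
    rw [hcomm, hx, map_zero]
  have hrange : N.IsInvt (LinearMap.range (f ^ n)) := by
    intro a
    rintro _ ⟨x, ⟨y, rfl⟩, rfl⟩
    exact ⟨N.ρ a y, hcomm a n y⟩
  rcases hN.2 _ _ hker hrange hn with h | h
  · left
    have hinjn : Function.Injective (f ^ n) := by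
      rw [← LinearMap.ker_eq_bot]; exact h
    have hinj : Function.Injective f := by
      intro x y hxy
      apply hinjn
      cases n with
      | zero => omega
      | succ m =>
        simp only [pow_succ, Module.End.mul_apply, hxy]
    exact ⟨hinj, (LinearMap.injective_iff_surjective).mp hinj⟩
  · right
    exact ⟨n, by rwa [← LinearMap.range_eq_bot]⟩

end MyAux

section MyAux2

variable {k C : Type} [Field k] [Ring C] [Algebra k C] (B : Subalgebra k C)

/-- `N` is an equivariant direct summand of the restriction of `R` to `B`,
expressed through a split injection. -/
def SummandData (N : AlgRep k ↥B) (R : AlgRep k C) : Prop :=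
  ∃ (i : N.V →ₗ[k] R.V) (r : R.V →ₗ[k] N.V),
    (∀ (b : ↥B) (v : N.V), i (N.ρ b v) = R.ρ (b : C) (i v)) ∧
    (∀ (b : ↥B) (v : R.V), r (R.ρ (b : C) v) = N.ρ b (r v)) ∧
    ∀ v, r (i v) = v

lemma proj_comm {R : AlgRep k C} {p q : Submodule k R.V}
    (hp : R.IsInvt p) (hq : R.IsInvt q) (hpq : IsCompl p q) (c : C) (x : R.V) :
    ((p.linearProjOfIsCompl q hpq (R.ρ c x)) : R.V) = R.ρ c (p.linearProjOfIsCompl q hpq x) := by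
  set π := p.linearProjOfIsCompl q hpq
  set π' := q.linearProjOfIsCompl p hpq.symm
  have hx : ((π x : R.V) + (π' x : R.V)) = x :=
    Submodule.projection_add_projection_eq_self hpq x
  have h1 : R.ρ c (π x : R.V) ∈ p := hp c ⟨_, (π x).2, rfl⟩
  have h2 : R.ρ c (π' x : R.V) ∈ q := hq c ⟨_, (π' x).2, rfl⟩
  have : R.ρ c x = R.ρ c (π x : R.V) + R.ρ c (π' x : R.V) := by rw [← map_add, hx]
  rw [this, map_add]
  have e1 : π (R.ρ c (π x : R.V)) = ⟨_, h1⟩ := Submodule.linearProjOfIsCompl_apply_left hpq ⟨_, h1⟩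
  have e2 : π (R.ρ c (π' x : R.V)) = 0 := Submodule.linearProjOfIsCompl_apply_right' hpq h2
  rw [e1, e2, add_zero]

/-- The key splitting step: if `N` (indecomposable) is a summand of `R|_B` and
`R = p ⊕ q` with `p`, `q` invariant, then `N` is a summand of `p|_B` or `q|_B`. -/
lemma summand_of_isCompl (N : AlgRep k ↥B) [FiniteDimensional k N.V] (hN : N.Indec)
    (R : AlgRep k C) {p q : Submodule k R.V}
    (hp : R.IsInvt p) (hq : R.IsInvt q) (hpq : IsCompl p q)
    (hdata : SummandData B N R) :
    SummandData B N (R.subrep p hp) ∨ SummandData B N (R.subrep q hq) := by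
  obtain ⟨i, r, hi, hr, hri⟩ := hdata
  set π := p.linearProjOfIsCompl q hpq with hπdef
  set π' := q.linearProjOfIsCompl p hpq.symm with hπ'def
  set f : Module.End k N.V := r ∘ₗ p.subtype ∘ₗ π ∘ₗ i with hfdef
  set g : Module.End k N.V := r ∘ₗ q.subtype ∘ₗ π' ∘ₗ i with hgdef
  have hfeq : ∀ (b : ↥B) (v : N.V), f (N.ρ b v) = N.ρ b (f v) := by
    intro b v
    simp only [hfdef, LinearMap.comp_apply, Submodule.coe_subtype]
    rw [hi, proj_comm hp hq hpq, hr]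
  have hgeq : ∀ (b : ↥B) (v : N.V), g (N.ρ b v) = N.ρ b (g v) := by
    intro b v
    simp only [hgdef, LinearMap.comp_apply, Submodule.coe_subtype]
    rw [hi, proj_comm hq hp hpq.symm, hr]
  have hfg : f + g = 1 := by
    ext v
    simp only [LinearMap.add_apply, hfdef, hgdef, LinearMap.comp_apply,
      Submodule.coe_subtype, Module.End.one_apply]
    rw [← map_add, (show (π (i v) : R.V) + π' (i v) = i v from Submodule.projection_add_projection_eq_self hpq (i v)), hri]
  -- generic: a bijective split through one side gives summand data
  have key : ∀ (p' q' : Submodule k R.V) (hp' : R.IsInvt p') (hq' : R.IsInvt q')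
      (hpq' : IsCompl p' q'),
      Function.Bijective (r ∘ₗ p'.subtype ∘ₗ (p'.linearProjOfIsCompl q' hpq') ∘ₗ i) →
      SummandData B N (R.subrep p' hp') := by
    intro p' q' hp' hq' hpq' hbij
    set π₀ := p'.linearProjOfIsCompl q' hpq'
    set f₀ : Module.End k N.V := r ∘ₗ p'.subtype ∘ₗ π₀ ∘ₗ i
    set E := LinearEquiv.ofBijective f₀ hbij with hEdef
    have hEapp : ∀ v, E v = f₀ v := fun _ => rfl
    have hfeq₀ : ∀ (b : ↥B) (v : N.V), f₀ (N.ρ b v) = N.ρ b (f₀ v) := by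
      intro b v
      simp only [LinearMap.comp_apply, Submodule.coe_subtype, f₀]
      rw [hi, proj_comm hp' hq' hpq', hr]
    have hEs : ∀ (b : ↥B) (w : N.V), E.symm (N.ρ b w) = N.ρ b (E.symm w) := by
      intro b w
      apply E.injective
      rw [E.apply_symm_apply, hEapp, hfeq₀, ← hEapp, E.apply_symm_apply]
    refine ⟨π₀ ∘ₗ i, E.symm.toLinearMap ∘ₗ r ∘ₗ p'.subtype, ?_, ?_, ?_⟩
    · intro b v
      apply Subtype.ext
      rw [AlgRep.subrep_apply]
      show ((π₀ (i (N.ρ b v))) : R.V) = R.ρ (b : C) ((π₀ (i v) : R.V))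
      rw [hi, proj_comm hp' hq' hpq']
    · intro b v
      show E.symm (r (R.ρ (b : C) (p'.subtype v))) = N.ρ b (E.symm (r (p'.subtype v)))
      rw [hr, hEs]
    · intro v
      show E.symm (f₀ v) = v
      rw [← hEapp, E.symm_apply_apply]
  rcases bijective_or_nilpotent N hN f hfeq with hbij | hnil
  · exact Or.inl (key p q hp hq hpq hbij)
  · right
    apply key q p hq hp hpq.symm
    have hg1 : g = 1 - f := by rw [← hfg, add_sub_cancel_left]
    have : IsUnit g := by rw [hg1]; exact hnil.isUnit_one_sub
    exact (Module.End.isUnit_iff g).mp this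

lemma aux_main (N : AlgRep k ↥B) [FiniteDimensional k N.V] (hN : N.Indec) :
    ∀ (n : ℕ) (R : AlgRep k C), FiniteDimensional k R.V → Module.finrank k R.V ≤ n →
      SummandData B N R →
      ∃ M : AlgRep k C, FiniteDimensional k M.V ∧ M.Indec ∧
        Module.finrank k M.V ≤ n ∧ SummandData B N M := by
  intro n
  induction n using Nat.strong_induction_on with
  | _ n IH =>
  intro R hfin hrank hdata
  by_cases hind : ∀ p q : Submodule k R.V, R.IsInvt p → R.IsInvt q → IsCompl p q →
      p = ⊥ ∨ q = ⊥
  · refine ⟨R, hfin, ⟨?_, hind⟩, hrank, hdata⟩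
    obtain ⟨i, r, hi, hr, hri⟩ := hdata
    obtain ⟨v, w, hvw⟩ := hN.1
    refine ⟨i v, i w, fun hc => hvw ?_⟩
    have := congrArg r hc
    rwa [hri, hri] at this
  · push_neg at hind
    obtain ⟨p, q, hp, hq, hpq, hpbot, hqbot⟩ := hind
    have hd := summand_of_isCompl B N hN R hp hq hpq hdata
    have hplt : Module.finrank k ↥p < n := by
      have h1 := Submodule.finrank_add_eq_of_isCompl hpq
      have h2 : 0 < Module.finrank k ↥q := by
        rcases Nat.eq_zero_or_pos (Module.finrank k ↥q) with h | h
        · exact absurd (Submodule.finrank_eq_zero.mp h) hqbot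
        · exact h
      omega
    have hqlt : Module.finrank k ↥q < n := by
      have h1 := Submodule.finrank_add_eq_of_isCompl hpq
      have h2 : 0 < Module.finrank k ↥p := by
        rcases Nat.eq_zero_or_pos (Module.finrank k ↥p) with h | h
        · exact absurd (Submodule.finrank_eq_zero.mp h) hpbot
        · exact h
      omega
    rcases hd with hd | hd
    · obtain ⟨M, h1, h2, h3, h4⟩ :=
        IH (Module.finrank k ↥p) hplt (R.subrep p hp)
          (by haveI := hfin; exact Module.Finite.of_injective p.subtype p.injective_subtype) le_rfl hd
      exact ⟨M, h1, h2, le_trans h3 hplt.le, h4⟩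
    · obtain ⟨M, h1, h2, h3, h4⟩ :=
        IH (Module.finrank k ↥q) hqlt (R.subrep q hq)
          (by haveI := hfin; exact Module.Finite.of_injective q.subtype q.injective_subtype) le_rfl hd
      exact ⟨M, h1, h2, le_trans h3 hqlt.le, h4⟩

end MyAux2

section MyAux3

open TensorProduct

variable {k C : Type} [Field k] [Ring C] [Algebra k C]

/-- Left multiplication of `C` on `C ⊗ₖ V`, as an algebra map. -/
noncomputable def lmulTensor (Nv : Type) [AddCommGroup Nv] [Module k Nv] :
    C →ₐ[k] Module.End k (C ⊗[k] Nv) where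
  toFun c := LinearMap.rTensor Nv (LinearMap.mulLeft k c)
  map_one' := TensorProduct.ext' fun c n => by
    simp [LinearMap.rTensor_tmul, LinearMap.mulLeft_apply]
  map_mul' a b := TensorProduct.ext' fun c n => by
    simp [LinearMap.rTensor_tmul, LinearMap.mulLeft_apply, mul_assoc]
  map_zero' := TensorProduct.ext' fun c n => by
    simp [LinearMap.rTensor_tmul, LinearMap.mulLeft_apply]
  map_add' a b := TensorProduct.ext' fun c n => by
    simp [LinearMap.rTensor_tmul, LinearMap.mulLeft_apply, add_mul, add_tmul]
  commutes' r := TensorProduct.ext' fun c n => by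
    simp [LinearMap.rTensor_tmul, LinearMap.mulLeft_apply, Algebra.smul_def,
      Module.algebraMap_end_apply, smul_tmul']

variable (B : Subalgebra k C) (N : AlgRep k ↥B)

/-- The relations submodule defining `C ⊗_B N` as a quotient of `C ⊗ₖ N`. -/
noncomputable def Wsub : Submodule k (C ⊗[k] N.V) :=
  Submodule.span k
    {z | ∃ (c : C) (b : ↥B) (n : N.V), z = (c * (b : C)) ⊗ₜ[k] n - c ⊗ₜ[k] (N.ρ b n)}

lemma Wsub_invt (c : C) : (Wsub B N).map (lmulTensor N.V c) ≤ Wsub B N := by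
  rw [Wsub, Submodule.map_span_le]
  rintro _ ⟨c', b, n, rfl⟩
  apply Submodule.subset_span
  refine ⟨c * c', b, n, ?_⟩
  simp only [lmulTensor, AlgHom.coe_mk, RingHom.coe_mk, MonoidHom.coe_mk, OneHom.coe_mk,
    map_sub, LinearMap.rTensor_tmul, LinearMap.mulLeft_apply, mul_assoc]

lemma Wsub_le (c : C) : Wsub B N ≤ (Wsub B N).comap (lmulTensor N.V c) :=
  fun x hx => Wsub_invt B N c ⟨x, hx, rfl⟩

/-- The induced representation `C ⊗_B N`. -/
noncomputable def indRep : AlgRep k C where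
  V := (C ⊗[k] N.V) ⧸ Wsub B N
  ρ :=
  { toFun := fun c => (Wsub B N).mapQ (Wsub B N) (lmulTensor N.V c)
      (fun x hx => Wsub_invt B N c ⟨x, hx, rfl⟩)
    map_one' := by
      refine Submodule.linearMap_qext _ ?_
      ext z
      simp [Submodule.mapQ_apply, map_one]
    map_mul' := by
      intro a b
      refine Submodule.linearMap_qext _ ?_
      ext z
      simp [Submodule.mapQ_apply, map_mul]
    map_zero' := by
      refine Submodule.linearMap_qext _ ?_
      ext z
      simp [Submodule.mapQ_apply]
    map_add' := by
      intro a b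
      refine Submodule.linearMap_qext _ ?_
      ext z
      simp [Submodule.mapQ_apply, map_add]
    commutes' := by
      intro r
      refine Submodule.linearMap_qext _ ?_
      ext z
      simp [Submodule.mapQ_apply, AlgHom.commutes, Module.algebraMap_end_apply] }

lemma indRep_rho_mk (c : C) (z : C ⊗[k] N.V) :
    (indRep B N).ρ c (Submodule.Quotient.mk z) =
      Submodule.Quotient.mk (LinearMap.rTensor N.V (LinearMap.mulLeft k c) z) :=
  rfl

variable {X : Submodule k C}
  (hbimod : ∀ b ∈ B, ∀ x ∈ X, b * x ∈ X ∧ x * b ∈ X)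
  (hcompl : IsCompl (Subalgebra.toSubmodule B) X)

/-- The `B`-linear projection `C → B` along `X`. -/
noncomputable def projB : C →ₗ[k] ↥B where
  toFun c := ⟨((Subalgebra.toSubmodule B).linearProjOfIsCompl X hcompl c : C),
    ((Subalgebra.toSubmodule B).linearProjOfIsCompl X hcompl c).2⟩
  map_add' a b := by apply Subtype.ext; simp
  map_smul' m a := by apply Subtype.ext; simp

lemma projB_coe (c : C) :
    ((projB B hcompl c : ↥B) : C)
      = ((Subalgebra.toSubmodule B).linearProjOfIsCompl X hcompl c : C) := rfl

lemma projB_of_mem {c : C} (hc : c ∈ B) : projB B hcompl c = ⟨c, hc⟩ :=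
  Subtype.ext (congrArg Subtype.val (Submodule.linearProjOfIsCompl_apply_left hcompl
    (⟨c, hc⟩ : ↥(Subalgebra.toSubmodule B))))

lemma projB_of_mem' {c : C} (hc : c ∈ X) : projB B hcompl c = 0 := by
  apply Subtype.ext
  rw [projB_coe]
  exact congrArg Subtype.val (Submodule.linearProjOfIsCompl_apply_right' hcompl hc)

lemma projB_decomp (c : C) : c - ((projB B hcompl c : ↥B) : C) ∈ X := by
  have h := Submodule.projection_add_projection_eq_self hcompl c
  rw [projB_coe]
  have h2 : c - ((Subalgebra.toSubmodule B).linearProjOfIsCompl X hcompl c : C)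
      = (X.linearProjOfIsCompl _ hcompl.symm c : C) :=
    sub_eq_iff_eq_add'.mpr h.symm
  rw [h2]
  exact (X.linearProjOfIsCompl _ hcompl.symm c).2

include hbimod in
lemma projB_mul_right (c : C) (b : ↥B) :
    projB B hcompl (c * (b : C)) = projB B hcompl c * b := by
  set p := projB B hcompl c with hp
  have hc : c = ((p : ↥B) : C) + (c - ((p : ↥B) : C)) := by abel
  have hx : c - ((p : ↥B) : C) ∈ X := projB_decomp B hcompl c
  rw [hc, add_mul, map_add]
  have h1 : ((p : ↥B) : C) * (b : C) = ((p * b : ↥B) : C) := rfl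
  have h2 : projB B hcompl (((p * b : ↥B) : C)) = p * b := projB_of_mem B hcompl (p * b).2
  have h3 : projB B hcompl ((c - ((p : ↥B) : C)) * (b : C)) = 0 :=
    projB_of_mem' B hcompl ((hbimod b b.2 _ hx).2)
  rw [h1, h2, h3, add_zero]

include hbimod in
lemma projB_mul_left (c : C) (b : ↥B) :
    projB B hcompl ((b : C) * c) = b * projB B hcompl c := by
  set p := projB B hcompl c with hp
  have hc : c = ((p : ↥B) : C) + (c - ((p : ↥B) : C)) := by abel
  have hx : c - ((p : ↥B) : C) ∈ X := projB_decomp B hcompl c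
  rw [hc, mul_add, map_add]
  have h1 : (b : C) * ((p : ↥B) : C) = ((b * p : ↥B) : C) := rfl
  have h2 : projB B hcompl (((b * p : ↥B) : C)) = b * p := projB_of_mem B hcompl (b * p).2
  have h3 : projB B hcompl ((b : C) * (c - ((p : ↥B) : C))) = 0 :=
    projB_of_mem' B hcompl ((hbimod b b.2 _ hx).1)
  rw [h1, h2, h3, add_zero]

lemma projB_one : projB B hcompl (1 : C) = 1 :=
  projB_of_mem B hcompl B.one_mem

end MyAux3

set_option maxHeartbeats 1600000 in
open TensorProduct in
theorem indecomposable_summand_of_extension_for_cleaving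
    {k C : Type} [Field k] [Ring C] [Algebra k C]
    (B : Subalgebra k C) (X : Submodule k C)
    (hbimod : ∀ b ∈ B, ∀ x ∈ X, b * x ∈ X ∧ x * b ∈ X)
    (hcompl : IsCompl (Subalgebra.toSubmodule B) X)
    [FiniteDimensional k ↥X]
    (N : AlgRep k ↥B) [FiniteDimensional k N.V] (hN : N.Indec) :
    ∃ M : AlgRep k C, FiniteDimensional k M.V ∧ M.Indec ∧
      Module.finrank k M.V ≤ (1 + Module.finrank k ↥X) * Module.finrank k N.V ∧
      ∃ P Q : Submodule k M.V,
        (M.res B).IsInvt P ∧ (M.res B).IsInvt Q ∧ IsCompl P Q ∧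
        ∃ e : N.V ≃ₗ[k] ↥P,
          ∀ (b : ↥B) (v : N.V), ((e (N.ρ b v)) : M.V) = M.ρ (b : C) (e v : M.V) := by
  classical
  set M0 : AlgRep k C := indRep B N with hM0
  -- the projection `C ⊗ N → N`
  set πbar : (C ⊗[k] N.V) →ₗ[k] N.V :=
    TensorProduct.lift (LinearMap.comp N.ρ.toLinearMap (projB B hcompl)) with hπbardef
  have hπbar : ∀ (c : C) (n : N.V), πbar (c ⊗ₜ[k] n) = N.ρ (projB B hcompl c) n := by
    intro c n; simp [hπbardef, TensorProduct.lift.tmul]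
  have hWker : Wsub B N ≤ LinearMap.ker πbar := by
    rw [Wsub, Submodule.span_le]
    rintro _ ⟨c, b, n, rfl⟩
    simp only [SetLike.mem_coe, LinearMap.mem_ker, map_sub, hπbar]
    rw [projB_mul_right B hbimod hcompl, map_mul]
    simp [Module.End.mul_apply]
  set μ : (C ⊗[k] N.V) →ₗ[k] M0.V := (Wsub B N).mkQ with hμdef
  set ι : N.V →ₗ[k] M0.V := μ ∘ₗ (TensorProduct.mk k C N.V 1) with hιdef
  set π : M0.V →ₗ[k] N.V := (Wsub B N).liftQ πbar hWker with hπdef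
  have hιπ : ∀ v, π (ι v) = v := by
    intro v
    show πbar ((1 : C) ⊗ₜ[k] v) = v
    rw [hπbar, projB_one, map_one, Module.End.one_apply]
  have hι : ∀ (b : ↥B) (v : N.V), ι (N.ρ b v) = M0.ρ (b : C) (ι v) := by
    intro b v
    show (Wsub B N).mkQ ((1 : C) ⊗ₜ[k] (N.ρ b v))
      = M0.ρ (b : C) ((Wsub B N).mkQ ((1 : C) ⊗ₜ[k] v))
    rw [Submodule.mkQ_apply, Submodule.mkQ_apply, indRep_rho_mk]
    rw [Submodule.Quotient.eq]
    have h2 : (1 : C) ⊗ₜ[k] (N.ρ b v)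
        - LinearMap.rTensor N.V (LinearMap.mulLeft k (b : C)) ((1 : C) ⊗ₜ[k] v)
        = -(((1 : C) * (b : C)) ⊗ₜ[k] v - (1 : C) ⊗ₜ[k] (N.ρ b v)) := by
      rw [LinearMap.rTensor_tmul, LinearMap.mulLeft_apply, mul_one, one_mul]
      abel
    rw [h2]
    exact (Wsub B N).neg_mem (Submodule.subset_span (R := k)
      (s := {z | ∃ (c' : C) (b' : ↥B) (n' : N.V),
        z = (c' * (b' : C)) ⊗ₜ[k] n' - c' ⊗ₜ[k] (N.ρ b' n')}) ⟨1, b, v, rfl⟩)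
  have hπeq : ∀ (b : ↥B) (m : M0.V), π (M0.ρ (b : C) m) = N.ρ b (π m) := by
    intro b m
    obtain ⟨z, rfl⟩ := (Wsub B N).mkQ_surjective m
    rw [Submodule.mkQ_apply, indRep_rho_mk]
    show πbar (LinearMap.rTensor N.V (LinearMap.mulLeft k (b : C)) z) = N.ρ b (πbar z)
    induction z using TensorProduct.induction_on with
    | zero => simp
    | tmul c n =>
      rw [LinearMap.rTensor_tmul, LinearMap.mulLeft_apply, hπbar, hπbar,
        projB_mul_left B hbimod hcompl, map_mul, Module.End.mul_apply]
    | add z₁ z₂ h₁ h₂ => simp only [map_add, h₁, h₂]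
  -- finiteness and dimension bound
  set Φ : (N.V × (↥X ⊗[k] N.V)) →ₗ[k] M0.V :=
    LinearMap.coprod ι (μ ∘ₗ LinearMap.rTensor N.V X.subtype) with hΦdef
  have hΦmk : ∀ z : C ⊗[k] N.V, ∃ a, Φ a = μ z := by
    intro z
    induction z using TensorProduct.induction_on with
    | zero => exact ⟨0, by simp⟩
    | tmul c n =>
      refine ⟨(N.ρ (projB B hcompl c) n,
        (⟨c - ((projB B hcompl c : ↥B) : C), projB_decomp B hcompl c⟩ : ↥X) ⊗ₜ[k] n), ?_⟩
      have hcoprod : Φ (N.ρ (projB B hcompl c) n,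
          (⟨c - ((projB B hcompl c : ↥B) : C), projB_decomp B hcompl c⟩ : ↥X) ⊗ₜ[k] n)
          = ι (N.ρ (projB B hcompl c) n)
            + μ ((c - ((projB B hcompl c : ↥B) : C)) ⊗ₜ[k] n) := by
        simp [hΦdef, LinearMap.coprod_apply, LinearMap.rTensor_tmul]
      rw [hcoprod]
      have h1 : ι (N.ρ (projB B hcompl c) n)
          = μ ((((projB B hcompl c : ↥B) : C)) ⊗ₜ[k] n) := by
        show μ ((1 : C) ⊗ₜ[k] (N.ρ (projB B hcompl c) n)) = _
        rw [hμdef]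
        apply (Submodule.Quotient.eq _).mpr
        have hgen := Submodule.subset_span (R := k)
          (s := {z | ∃ (c' : C) (b : ↥B) (n' : N.V),
            z = (c' * (b : C)) ⊗ₜ[k] n' - c' ⊗ₜ[k] (N.ρ b n')})
          ⟨1, projB B hcompl c, n, rfl⟩
        have h2 : (1 : C) ⊗ₜ[k] (N.ρ (projB B hcompl c) n)
            - (((projB B hcompl c : ↥B) : C)) ⊗ₜ[k] n
            = -(((1 : C) * ((projB B hcompl c : ↥B) : C)) ⊗ₜ[k] n
              - (1 : C) ⊗ₜ[k] (N.ρ (projB B hcompl c) n)) := by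
          rw [one_mul]; abel
        rw [h2]
        exact (Wsub B N).neg_mem hgen
      rw [h1, ← map_add, ← add_tmul]
      congr 2
      rw [add_sub_cancel]
    | add z₁ z₂ h₁ h₂ =>
      obtain ⟨a₁, ha₁⟩ := h₁
      obtain ⟨a₂, ha₂⟩ := h₂
      exact ⟨a₁ + a₂, by rw [map_add, ha₁, ha₂, map_add]⟩
  have hΦ : Function.Surjective Φ := by
    intro m
    obtain ⟨z, rfl⟩ := (Wsub B N).mkQ_surjective m
    exact hΦmk z
  have hfinM0 : FiniteDimensional k M0.V := Module.Finite.of_surjective Φ hΦ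
  have hrankM0 : Module.finrank k M0.V
      ≤ (1 + Module.finrank k ↥X) * Module.finrank k N.V := by
    have h1 := LinearMap.finrank_range_le Φ
    rw [LinearMap.range_eq_top.mpr hΦ, finrank_top] at h1
    refine le_trans h1 ?_
    rw [Module.finrank_prod, Module.finrank_tensorProduct, add_mul, one_mul]
  obtain ⟨M, hfin, hindec, hrank, i, r, hi, hr, hri⟩ :=
    aux_main B N hN ((1 + Module.finrank k ↥X) * Module.finrank k N.V) M0 hfinM0 hrankM0
      ⟨ι, π, hι, hπeq, hιπ⟩
  have hinj : Function.Injective i := by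
    intro a b h
    rw [← hri a, ← hri b, h]
  refine ⟨M, hfin, hindec, hrank, LinearMap.range i, LinearMap.ker r, ?_, ?_, ⟨?_, ?_⟩, ?_⟩
  · rintro b _ ⟨_, ⟨v, rfl⟩, rfl⟩
    exact ⟨N.ρ b v, hi b v⟩
  · rintro b _ ⟨y, hy, rfl⟩
    change r y = 0 at hy
    show r (M.ρ (b : C) y) = 0
    exact (hr b y).trans (by rw [hy, map_zero])
  · rw [Submodule.disjoint_def]
    rintro _ ⟨v, rfl⟩ hx
    rw [LinearMap.mem_ker, hri] at hx
    rw [hx, map_zero]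
  · rw [codisjoint_iff, eq_top_iff]
    rintro x -
    rw [Submodule.mem_sup]
    refine ⟨i (r x), ⟨r x, rfl⟩, x - i (r x), ?_, by abel⟩
    rw [LinearMap.mem_ker, map_sub, hri, sub_self]
  · refine ⟨LinearEquiv.ofInjective i hinj, ?_⟩
    intro b v
    rw [LinearEquiv.ofInjective_apply, LinearEquiv.ofInjective_apply, hi]
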